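/- arXiv:2003.04201 — 4 statements merged into one kernel-verified Lean document; each statement's English description precedes it below -/
import Mathlib

section
/- Let g : ℝ^d → ℝ ∪ {+∞} be a proper, convex, lower semicontinuous function and let f : ℝ^d → ℝ be a convex differentiable function whose gradient ∇f is L-Lipschitz (L > 0). Let (α_k)_{k∈ℕ} be a sequence of stepsizes with 0 < α_k ≤ 1/L for all k, and let (x_k)_{k∈ℕ} satisfy x_{k+1} = prox_{α_k g}(x_k − α_k ∇f(x_k)) for all k ≥ 0. Then the sequence (x_k)_{k∈ℕ} is self-contracted. -/
open scoped InnerProductSpace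
open Topology Filter

/-- A sequence `x : ℕ → ℝ^d` is self-contracted if for all `k₁ ≤ k₂ ≤ k₃`,
`‖x k₃ - x k₂‖ ≤ ‖x k₃ - x k₁‖`. -/
def SelfContracted {d : ℕ} (x : ℕ → EuclideanSpace ℝ (Fin d)) : Prop :=
  ∀ k₁ k₂ k₃ : ℕ, k₁ ≤ k₂ → k₂ ≤ k₃ → ‖x k₃ - x k₂‖ ≤ ‖x k₃ - x k₁‖

/-- Convexity for an extended-real-valued function. -/
def ERealConvex {d : ℕ} (g : EuclideanSpace ℝ (Fin d) → EReal) : Prop :=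
  ∀ x y : EuclideanSpace ℝ (Fin d), ∀ a b : ℝ, 0 ≤ a → 0 ≤ b → a + b = 1 →
    g (a • x + b • y) ≤ (a : EReal) * g x + (b : EReal) * g y

/-- `g` is proper: it never takes the value `⊥` and is not identically `⊤`. -/
def ERealProper {d : ℕ} (g : EuclideanSpace ℝ (Fin d) → EReal) : Prop :=
  (∀ x, g x ≠ ⊥) ∧ (∃ x, g x ≠ ⊤)

/-- `p = prox_{αg}(y)`, i.e. `p` minimizes `z ↦ g z + (1/(2α))‖z - y‖²`
(for proper convex lsc `g` such a minimizer is unique). -/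
def IsProx {d : ℕ} (g : EuclideanSpace ℝ (Fin d) → EReal) (α : ℝ)
    (y p : EuclideanSpace ℝ (Fin d)) : Prop :=
  ∀ z, g p + ((1 / (2 * α) * ‖p - y‖ ^ 2 : ℝ) : EReal)
      ≤ g z + ((1 / (2 * α) * ‖z - y‖ ^ 2 : ℝ) : EReal)

lemma line_hasDerivAt (f : EuclideanSpace ℝ (Fin d) → ℝ)
    (f' : EuclideanSpace ℝ (Fin d) → EuclideanSpace ℝ (Fin d))
    (hf_diff : ∀ x, HasGradientAt f (f' x) x)
    (x v : EuclideanSpace ℝ (Fin d)) (t : ℝ) :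
    HasDerivAt (fun s : ℝ => f (x + s • v)) ⟪f' (x + t • v), v⟫_ℝ t := by
  have hline : HasDerivAt (fun s : ℝ => x + s • v) v t :=
    by simpa using ((hasDerivAt_id t).smul_const v).const_add x
  have hf : HasFDerivAt f (InnerProductSpace.toDual ℝ _ (f' (x + t • v))) (x + t • v) :=
    hf_diff (x + t • v)
  have := hf.comp_hasDerivAt t hline
  simpa [InnerProductSpace.toDual_apply_apply, Function.comp_def] using this

lemma convex_grad_ineq (f : EuclideanSpace ℝ (Fin d) → ℝ)
    (f' : EuclideanSpace ℝ (Fin d) → EuclideanSpace ℝ (Fin d))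
    (hf_convex : ConvexOn ℝ Set.univ f)
    (hf_diff : ∀ x, HasGradientAt f (f' x) x)
    (x z : EuclideanSpace ℝ (Fin d)) :
    f x + ⟪f' x, z - x⟫_ℝ ≤ f z := by
  set φ : ℝ → ℝ := fun s => f (x + s • (z - x)) with hφ
  have hd : HasDerivAt φ ⟪f' x, z - x⟫_ℝ 0 := by
    simpa using line_hasDerivAt f f' hf_diff x (z - x) 0
  have hslope : Filter.Tendsto (slope φ 0) (𝓝[>] 0) (𝓝 ⟪f' x, z - x⟫_ℝ) :=
    (hasDerivAt_iff_tendsto_slope.1 hd).mono_left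
      (nhdsWithin_mono 0 (fun t ht => ne_of_gt ht))
  have hbound : ∀ᶠ t in 𝓝[>] (0:ℝ), slope φ 0 t ≤ f z - f x := by
    filter_upwards [Ioo_mem_nhdsGT_of_mem (by norm_num : (0:ℝ) ∈ Set.Ico 0 1)]
      with t ht
    obtain ⟨ht0, ht1⟩ := ht
    have hconv := hf_convex.2 (Set.mem_univ x) (Set.mem_univ z)
      (by linarith : (0:ℝ) ≤ 1 - t) (le_of_lt ht0) (by ring)
    have hpt : (1 - t) • x + t • z = x + t • (z - x) := by
      simp [smul_sub, sub_smul]; abel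
    rw [hpt] at hconv
    have : φ t ≤ (1 - t) * f x + t * f z := hconv
    rw [slope_def_field]
    have hφ0 : φ 0 = f x := by simp [hφ]
    rw [hφ0]
    rw [sub_zero, div_le_iff₀ ht0]
    nlinarith
  have := le_of_tendsto hslope hbound
  linarith

lemma descent_lemma {L : ℝ} (hL : 0 < L) (f : EuclideanSpace ℝ (Fin d) → ℝ)
    (f' : EuclideanSpace ℝ (Fin d) → EuclideanSpace ℝ (Fin d))
    (hf_diff : ∀ x, HasGradientAt f (f' x) x)
    (hf_lip : ∀ x y, ‖f' x - f' y‖ ≤ L * ‖x - y‖)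
    (x y : EuclideanSpace ℝ (Fin d)) :
    f y ≤ f x + ⟪f' x, y - x⟫_ℝ + L / 2 * ‖y - x‖ ^ 2 := by
  set v := y - x with hv
  set D := ⟪f' x, v⟫_ℝ with hD
  set ψ : ℝ → ℝ := fun t => f (x + t • v) - t * D - L / 2 * ‖v‖ ^ 2 * t ^ 2 with hψ
  have hder : ∀ t : ℝ, HasDerivAt ψ (⟪f' (x + t • v), v⟫_ℝ - D - L / 2 * ‖v‖ ^ 2 * (2 * t)) t := by
    intro t
    exact ((line_hasDerivAt f f' hf_diff x v t).sub (hasDerivAt_mul_const D)).sub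
      (by simpa using (hasDerivAt_pow 2 t).const_mul (L / 2 * ‖v‖ ^ 2))
  have hanti : AntitoneOn ψ (Set.Icc 0 1) := by
    apply antitoneOn_of_deriv_nonpos (convex_Icc 0 1)
    · exact fun t _ => ((hder t).differentiableAt.continuousAt).continuousWithinAt
    · intro t ht
      exact (hder t).differentiableAt.differentiableWithinAt
    · intro t ht
      rw [interior_Icc] at ht
      rw [(hder t).deriv]
      have h1 : ⟪f' (x + t • v) - f' x, v⟫_ℝ ≤ ‖f' (x + t • v) - f' x‖ * ‖v‖ :=
        real_inner_le_norm _ _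
      have h2 : ‖f' (x + t • v) - f' x‖ ≤ L * (t * ‖v‖) := by
        have := hf_lip (x + t • v) x
        simpa [norm_smul, abs_of_pos ht.1] using this
      have h3 : ⟪f' (x + t • v), v⟫_ℝ - D = ⟪f' (x + t • v) - f' x, v⟫_ℝ := by
        rw [inner_sub_left]
      have hv0 : (0:ℝ) ≤ ‖v‖ := norm_nonneg _
      nlinarith [ht.1, mul_nonneg (le_of_lt ht.1) hv0]
  have h01 := hanti (Set.mem_Icc.2 ⟨le_refl 0, zero_le_one⟩)
    (Set.mem_Icc.2 ⟨zero_le_one, le_refl 1⟩) zero_le_one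
  simp only [hψ] at h01
  have : x + (1:ℝ) • v = y := by simp [hv]
  rw [this] at h01
  simp at h01
  linarith


lemma prox_subgrad {d : ℕ} (g : EuclideanSpace ℝ (Fin d) → EReal)
    (hg_convex : ERealConvex g) {α : ℝ} (hα : 0 < α)
    {y p : EuclideanSpace ℝ (Fin d)} (hp : IsProx g α y p)
    {b c : ℝ} (z : EuclideanSpace ℝ (Fin d)) (hb : g p = (b : EReal))
    (hc : g z = (c : EReal)) :
    b ≤ c + (1 / α) * ⟪p - y, z - p⟫_ℝ := by
  set c₀ : ℝ := 1 / (2 * α) with hc₀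
  have hc₀pos : 0 < c₀ := by positivity
  set I : ℝ := ⟪p - y, z - p⟫_ℝ with hI
  set S : ℝ := ‖z - p‖ ^ 2 with hS
  have hS0 : 0 ≤ S := by positivity
  -- step inequality for each t ∈ (0,1]
  have step : ∀ t : ℝ, 0 < t → t ≤ 1 → b ≤ c + 2 * c₀ * I + c₀ * t * S := by
    intro t ht0 ht1
    have h1 := hp (p + t • (z - p))
    have h2 : g (p + t • (z - p)) ≤ (((1 - t) * b + t * c : ℝ) : EReal) := by
      have := hg_convex p z (1 - t) t (by linarith) (le_of_lt ht0) (by ring)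
      have hpt : (1 - t) • p + t • z = p + t • (z - p) := by
        simp [smul_sub, sub_smul]; abel
      rw [hpt, hb, hc] at this
      calc g (p + t • (z - p)) ≤ ((1 - t : ℝ) : EReal) * (b : EReal) + (t : EReal) * (c : EReal) := this
        _ = (((1 - t) * b + t * c : ℝ) : EReal) := by
            rw [← EReal.coe_mul, ← EReal.coe_mul, ← EReal.coe_add]
    have h3 : ((b + c₀ * ‖p - y‖ ^ 2 : ℝ) : EReal)
        ≤ ((((1 - t) * b + t * c) + c₀ * ‖p + t • (z - p) - y‖ ^ 2 : ℝ) : EReal) := by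
      rw [EReal.coe_add, EReal.coe_add]
      calc ((b : ℝ) : EReal) + ((c₀ * ‖p - y‖ ^ 2 : ℝ) : EReal)
          = g p + ((1 / (2 * α) * ‖p - y‖ ^ 2 : ℝ) : EReal) := by rw [hb, hc₀]
        _ ≤ g (p + t • (z - p)) + ((1 / (2 * α) * ‖p + t • (z - p) - y‖ ^ 2 : ℝ) : EReal) := h1
        _ ≤ (((1 - t) * b + t * c : ℝ) : EReal) + ((c₀ * ‖p + t • (z - p) - y‖ ^ 2 : ℝ) : EReal) := by
            rw [hc₀]; exact add_le_add_left h2 _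
    rw [EReal.coe_le_coe_iff] at h3
    have hexp : ‖p + t • (z - p) - y‖ ^ 2
        = ‖p - y‖ ^ 2 + 2 * (t * I) + t ^ 2 * S := by
      have e : p + t • (z - p) - y = (p - y) + t • (z - p) := by abel
      rw [e, norm_add_sq_real, real_inner_smul_right, norm_smul]
      simp [hI, hS, mul_pow, abs_of_pos ht0]
    rw [hexp] at h3
    have hmul : t * b ≤ t * (c + 2 * c₀ * I + c₀ * t * S) := by nlinarith
    exact (mul_le_mul_iff_right₀ ht0).1 hmul
  have key : ∀ ε : ℝ, 0 < ε → b ≤ c + 2 * c₀ * I + ε := by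
    intro ε hε
    set t : ℝ := min 1 (ε / (c₀ * S + 1)) with ht
    have htpos : 0 < t := lt_min one_pos (by positivity)
    have ht1 : t ≤ 1 := min_le_left _ _
    have ht2 : t ≤ ε / (c₀ * S + 1) := min_le_right _ _
    have h := step t htpos ht1
    have hb2 : c₀ * t * S ≤ ε := by
      have h4 : t * (c₀ * S + 1) ≤ ε := by
        rw [← le_div_iff₀ (by positivity)]; exact ht2
      nlinarith
    linarith
  have h2c : 2 * c₀ = 1 / α := by rw [hc₀]; field_simp
  by_contra hcon
  push_neg at hcon
  rw [← h2c] at hcon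
  have := key ((b - (c + 2 * c₀ * I)) / 2) (by linarith)
  linarith


/-- The iterates of the proximal-gradient method with stepsizes `0 < α_k ≤ 1/L`
form a self-contracted sequence. -/
theorem proxGrad_selfContracted {d : ℕ} {L : ℝ} (hL : 0 < L)
    (g : EuclideanSpace ℝ (Fin d) → EReal)
    (hg_proper : ERealProper g) (hg_convex : ERealConvex g)
    (hg_lsc : LowerSemicontinuous g)
    (f : EuclideanSpace ℝ (Fin d) → ℝ)
    (f' : EuclideanSpace ℝ (Fin d) → EuclideanSpace ℝ (Fin d))
    (hf_convex : ConvexOn ℝ Set.univ f)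
    (hf_diff : ∀ x, HasGradientAt f (f' x) x)
    (hf_lip : ∀ x y, ‖f' x - f' y‖ ≤ L * ‖x - y‖)
    (α : ℕ → ℝ) (hα : ∀ k, 0 < α k ∧ α k ≤ 1 / L)
    (x : ℕ → EuclideanSpace ℝ (Fin d))
    (hx : ∀ k, IsProx g (α k) (x k - α k • f' (x k)) (x (k + 1))) :
    SelfContracted x := by
  intro k₁ k₂ k₃ h12 h23
  revert h12 h23
  revert k₁ k₂ k₃
  obtain ⟨hbot, z₀, hz₀⟩ := hg_proper
  set G : ℕ → ℝ := fun k => (g (x k)).toReal with hGdef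
  have hfin : ∀ k : ℕ, g (x (k + 1)) = ((G (k + 1) : ℝ) : EReal) := by
    intro k
    have hne_bot := hbot (x (k + 1))
    have hne_top : g (x (k + 1)) ≠ ⊤ := by
      intro htop
      have h := hx k z₀
      rw [htop, EReal.top_add_coe] at h
      exact absurd (top_le_iff.1 h)
        (ne_of_lt (EReal.add_lt_top hz₀ (EReal.coe_ne_top _)))
    exact (EReal.coe_toReal hne_top hne_bot).symm
  -- fundamental prox-gradient inequality
  have fund : ∀ k m : ℕ, 1 ≤ m →
      f (x (k + 1)) + G (k + 1) ≤ f (x m) + G m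
        + 1 / (2 * α k) * (‖x m - x k‖ ^ 2 - ‖x m - x (k + 1)‖ ^ 2) := by
    intro k m hm
    obtain ⟨hαk, hαk2⟩ := hα k
    set A := α k with hA
    set p := x (k + 1) with hpdef
    set z := x m with hzdef
    set y := x k - A • f' (x k) with hy
    have hGm : g z = ((G m : ℝ) : EReal) := by
      rw [hzdef]
      cases m with
      | zero => exact absurd hm (by omega)
      | succ n => exact hfin n
    have hsub : G (k + 1) ≤ G m + (1 / A) * ⟪p - y, z - p⟫_ℝ :=
      prox_subgrad g hg_convex hαk (hx k) z (hfin k) hGm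
    have edesc := descent_lemma hL f f' hf_diff hf_lip (x k) p
    have econv := convex_grad_ineq f f' hf_convex hf_diff (x k) z
    have epy : p - y = (p - x k) + A • f' (x k) := by rw [hy]; abel
    have einner : ⟪p - y, z - p⟫_ℝ
        = ⟪p - x k, z - p⟫_ℝ + A * ⟪f' (x k), z - p⟫_ℝ := by
      rw [epy, inner_add_left, real_inner_smul_left]
    have eJ : ⟪p - x k, z - p⟫_ℝ
        = (‖z - x k‖ ^ 2 - ‖z - p‖ ^ 2 - ‖p - x k‖ ^ 2) / 2 := by
      have e : (z - p) + (p - x k) = z - x k := by abel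
      have := norm_add_sq_real (z - p) (p - x k)
      rw [e] at this
      rw [real_inner_comm]
      linarith
    have e2 : ⟪f' (x k), z - p⟫_ℝ + ⟪f' (x k), p - x k⟫_ℝ = ⟪f' (x k), z - x k⟫_ℝ := by
      rw [← inner_add_right]
      congr 1
      abel
    have hLA : L / 2 * ‖p - x k‖ ^ 2 ≤ 1 / (2 * A) * ‖p - x k‖ ^ 2 := by
      have hLA1 : L * A ≤ 1 := by
        calc L * A ≤ L * (1 / L) := mul_le_mul_of_nonneg_left hαk2 hL.le
          _ = 1 := by field_simp
      have hhalf : L / 2 ≤ 1 / (2 * A) := by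
        rw [div_le_div_iff₀ (by norm_num) (by positivity)]
        nlinarith
      exact mul_le_mul_of_nonneg_right hhalf (by positivity)
    have e1 : (1 / A) * (⟪p - x k, z - p⟫_ℝ + A * ⟪f' (x k), z - p⟫_ℝ)
        = 1 / (2 * A) * (‖z - x k‖ ^ 2 - ‖z - p‖ ^ 2 - ‖p - x k‖ ^ 2)
          + ⟪f' (x k), z - p⟫_ℝ := by
      rw [eJ]; field_simp
    rw [einner, e1] at hsub
    linarith
  -- monotonicity of F along iterates
  have mono : ∀ k : ℕ, 1 ≤ k → f (x (k + 1)) + G (k + 1) ≤ f (x k) + G k := by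
    intro k hk
    have h := fund k k hk
    have hαk := (hα k).1
    have h2 : 1 / (2 * α k) * (‖x k - x k‖ ^ 2 - ‖x k - x (k + 1)‖ ^ 2) ≤ 0 := by
      have : (0:ℝ) ≤ ‖x k - x (k + 1)‖ ^ 2 := by positivity
      have hpos : (0:ℝ) < 1 / (2 * α k) := by positivity
      have : ‖x k - x k‖ ^ 2 - ‖x k - x (k + 1)‖ ^ 2 ≤ 0 := by simp [this]
      exact mul_nonpos_of_nonneg_of_nonpos (le_of_lt hpos) this
    linarith
  have monoLe : ∀ j m : ℕ, 1 ≤ j → j ≤ m → f (x m) + G m ≤ f (x j) + G j := by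
    intro j m hj hjm
    induction m, hjm using Nat.le_induction with
    | base => exact le_refl _
    | succ n hn ih => exact le_trans (mono n (le_trans hj hn)) ih
  -- one-step contraction towards later iterates
  have step4 : ∀ k m : ℕ, k + 1 ≤ m → ‖x m - x (k + 1)‖ ≤ ‖x m - x k‖ := by
    intro k m hkm
    have h := fund k m (le_trans (Nat.le_add_left 1 k) hkm)
    have hmono := monoLe (k + 1) m (Nat.le_add_left 1 k) hkm
    have hαk := (hα k).1
    have hsq : ‖x m - x (k + 1)‖ ^ 2 ≤ ‖x m - x k‖ ^ 2 := by
      by_contra hcon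
      push_neg at hcon
      have hpos : (0:ℝ) < 1 / (2 * α k) := by positivity
      nlinarith
    by_contra hcon
    push_neg at hcon
    nlinarith [norm_nonneg (x m - x (k + 1)), norm_nonneg (x m - x k)]
  intro k₁ k₂ k₃ h12 h23
  induction k₂, h12 using Nat.le_induction with
  | base => exact le_refl _
  | succ n hn ih =>
      exact le_trans (step4 n k₃ h23) (ih (le_trans (Nat.le_succ n) h23))
end

section
/- Let g : ℝ^d → ℝ ∪ {+∞} be proper, convex, lower semicontinuous and let f : ℝ^d → ℝ be convex and differentiable. Let (α_k)_{k∈ℕ} be positive stepsizes and let (x_k)_{k∈ℕ} satisfy x_{k+1} = prox_{α_k g}(x_k − α_k ∇f(x_k)) together with the backtracking descent condition f(x_{k+1}) ≤ f(x_k) + ⟨∇f(x_k), x_{k+1} − x_k⟩ + (1/(2α_k))‖x_{k+1} − x_k‖² for every k ≥ 0. Then the sequence (x_k)_{k∈ℕ} is self-contracted. -/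
open scoped InnerProductSpace

section Aux

-- limit trick
lemma aux_nonneg_of_forall (A B : ℝ) (h : ∀ t : ℝ, 0 < t → t ≤ 1 → 0 ≤ A + t * B) :
    0 ≤ A := by
  by_contra h'
  push_neg at h'
  have hB : 0 < B := by nlinarith [h 1 one_pos le_rfl]
  have ht1 : 0 < min 1 (-A / (2 * B)) :=
    lt_min one_pos (div_pos (by linarith) (by linarith))
  have := h _ ht1 (min_le_left _ _)
  have h2 : min 1 (-A / (2 * B)) ≤ -A / (2 * B) := min_le_right _ _
  have h3 : (-A / (2 * B)) * B = -A / 2 := by field_simp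
  nlinarith [mul_le_mul_of_nonneg_right h2 hB.le]

variable {d : ℕ}

lemma aux_grad_ineq {f : EuclideanSpace ℝ (Fin d) → ℝ} {v w : EuclideanSpace ℝ (Fin d)}
    (hf_convex : ConvexOn ℝ Set.univ f) (hf : HasGradientAt f v w)
    (z : EuclideanSpace ℝ (Fin d)) : f w + ⟪v, z - w⟫_ℝ ≤ f z := by
  have hline : HasDerivAt (fun t : ℝ => w + t • (z - w)) (z - w) 0 := by
    simpa using ((hasDerivAt_id (0:ℝ)).smul_const (z - w)).const_add w
  have hq : HasDerivAt (fun t : ℝ => f (w + t • (z - w))) ⟪v, z - w⟫_ℝ 0 := by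
    have h0 : w + (0:ℝ) • (z - w) = w := by simp
    have hF : HasFDerivAt f (InnerProductSpace.toDual ℝ _ v) (w + (0:ℝ) • (z - w)) := by
      rw [h0]; exact hf.hasFDerivAt
    have := hF.comp_hasDerivAt 0 hline
    simpa [InnerProductSpace.toDual_apply_apply, Function.comp_def] using this
  have hslope : ∀ t : ℝ, 0 < t → t ≤ 1 →
      (f (w + t • (z - w)) - f w) / t ≤ f z - f w := by
    intro t ht ht1
    have hc := hf_convex.2 (Set.mem_univ w) (Set.mem_univ z)
      (show (0:ℝ) ≤ 1 - t by linarith) ht.le (by ring)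
    have heq : (1 - t) • w + t • z = w + t • (z - w) := by
      rw [smul_sub, sub_smul]; module
    rw [heq] at hc
    rw [div_le_iff₀ ht]
    simp only [smul_eq_mul] at hc
    nlinarith
  have htend : Filter.Tendsto (slope (fun t : ℝ => f (w + t • (z - w))) 0)
      (nhdsWithin 0 (Set.Ioi 0)) (nhds ⟪v, z - w⟫_ℝ) :=
    (hasDerivAt_iff_tendsto_slope.mp hq).mono_left
      (nhdsWithin_mono _ (fun t ht => ne_of_gt ht))
  have hle : ⟪v, z - w⟫_ℝ ≤ f z - f w := by
    refine le_of_tendsto htend ?_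
    filter_upwards [Ioc_mem_nhdsGT_of_mem (Set.left_mem_Ico.2 one_pos)] with t ht
    have := hslope t ht.1 ht.2
    simpa [slope_def_field, div_eq_inv_mul] using this
  linarith

lemma aux_prox_ne_top {g : EuclideanSpace ℝ (Fin d) → EReal}
    (hg_proper : ERealProper g) {α : ℝ} {y p : EuclideanSpace ℝ (Fin d)}
    (hprox : IsProx g α y p) : g p ≠ ⊤ := by
  obtain ⟨z₀, hz₀⟩ := hg_proper.2
  have h := hprox z₀
  intro htop
  rw [htop, EReal.top_add_coe] at h
  exact absurd (top_le_iff.mp h) (EReal.add_lt_top hz₀ (EReal.coe_ne_top _)).ne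

lemma aux_prox_vi {g : EuclideanSpace ℝ (Fin d) → EReal}
    (hg_proper : ERealProper g) (hg_convex : ERealConvex g)
    {α : ℝ} (hα : 0 < α) {y p : EuclideanSpace ℝ (Fin d)}
    (hprox : IsProx g α y p) (z : EuclideanSpace ℝ (Fin d)) (hz : g z ≠ ⊤) :
    (g p).toReal + (1 / α) * ⟪y - p, z - p⟫_ℝ ≤ (g z).toReal := by
  set gp := (g p).toReal with hgp
  set gz := (g z).toReal with hgz
  have hpcoe : ((gp : ℝ) : EReal) = g p := EReal.coe_toReal (aux_prox_ne_top hg_proper hprox) (hg_proper.1 p)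
  have hzcoe : ((gz : ℝ) : EReal) = g z := EReal.coe_toReal hz (hg_proper.1 z)
  set c : ℝ := 1 / (2 * α) with hc
  have hcpos : 0 < c := by positivity
  -- key: ∀ t ∈ (0,1], 0 ≤ (gz - gp + 2*c*⟪p-y, z-p⟫) + t * (c * ‖z-p‖^2)
  have key : 0 ≤ (gz - gp + 2 * c * ⟪p - y, z - p⟫_ℝ) := by
    apply aux_nonneg_of_forall _ (c * ‖z - p‖ ^ 2)
    intro t ht ht1
    set pt := (1 - t) • p + t • z with hpt
    have hconv := hg_convex p z (1 - t) t (by linarith) ht.le (by ring)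
    have hub : g pt ≤ (((1 - t) * gp + t * gz : ℝ) : EReal) := by
      rw [EReal.coe_add, EReal.coe_mul, EReal.coe_mul, hpcoe, hzcoe]
      exact hconv
    have hprox_pt := hprox pt
    have hchain : ((gp + c * ‖p - y‖ ^ 2 : ℝ) : EReal) ≤
        (((1 - t) * gp + t * gz + c * ‖pt - y‖ ^ 2 : ℝ) : EReal) := by
      rw [EReal.coe_add, EReal.coe_add]
      calc ((gp : ℝ) : EReal) + ((c * ‖p - y‖ ^ 2 : ℝ) : EReal)
          = g p + ((1 / (2 * α) * ‖p - y‖ ^ 2 : ℝ) : EReal) := by rw [hpcoe, hc]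
        _ ≤ g pt + ((1 / (2 * α) * ‖pt - y‖ ^ 2 : ℝ) : EReal) := hprox_pt
        _ ≤ (((1 - t) * gp + t * gz : ℝ) : EReal) + ((c * ‖pt - y‖ ^ 2 : ℝ) : EReal) := by
            rw [hc]; exact add_le_add hub le_rfl
    have hreal : gp + c * ‖p - y‖ ^ 2 ≤ (1 - t) * gp + t * gz + c * ‖pt - y‖ ^ 2 :=
      EReal.coe_le_coe_iff.mp hchain
    have hexp : pt - y = (p - y) + t • (z - p) := by rw [hpt, smul_sub, sub_smul]; module
    have hnorm : ‖pt - y‖ ^ 2 = ‖p - y‖ ^ 2 + 2 * (t * ⟪p - y, z - p⟫_ℝ) + t ^ 2 * ‖z - p‖ ^ 2 := by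
      rw [hexp, @norm_add_sq_real, real_inner_smul_right, norm_smul]
      simp [mul_pow, abs_of_pos ht]
      try ring
    rw [hnorm] at hreal
    have ht' : 0 ≤ t * ((gz - gp + 2 * c * ⟪p - y, z - p⟫_ℝ) + t * (c * ‖z - p‖ ^ 2)) := by
      nlinarith
    nlinarith
  have hinner : ⟪y - p, z - p⟫_ℝ = -⟪p - y, z - p⟫_ℝ := by
    rw [← inner_neg_left]; congr 1; abel
  have h2c : 1 / α = 2 * c := by rw [hc]; field_simp
  rw [hinner, h2c]
  linarith

lemma aux_step {g : EuclideanSpace ℝ (Fin d) → EReal}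
    (hg_proper : ERealProper g) (hg_convex : ERealConvex g)
    {f : EuclideanSpace ℝ (Fin d) → ℝ} (hf_convex : ConvexOn ℝ Set.univ f)
    {v : EuclideanSpace ℝ (Fin d)} {αk : ℝ} (hαk : 0 < αk)
    {xk xk1 : EuclideanSpace ℝ (Fin d)} (hv : HasGradientAt f v xk)
    (hprox : IsProx g αk (xk - αk • v) xk1)
    (hbt : f xk1 ≤ f xk + ⟪v, xk1 - xk⟫_ℝ + 1 / (2 * αk) * ‖xk1 - xk‖ ^ 2)
    (z : EuclideanSpace ℝ (Fin d)) (hz : g z ≠ ⊤) :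
    f xk1 + (g xk1).toReal + 1 / (2 * αk) * (‖z - xk1‖ ^ 2 - ‖z - xk‖ ^ 2)
      ≤ f z + (g z).toReal := by
  have hvi := aux_prox_vi hg_proper hg_convex hαk hprox z hz
  have hgr := aux_grad_ineq hf_convex hv z
  have e1 : ⟪xk - αk • v - xk1, z - xk1⟫_ℝ
      = ⟪xk - xk1, z - xk1⟫_ℝ - αk * ⟪v, z - xk1⟫_ℝ := by
    have h4 : xk - αk • v - xk1 = (xk - xk1) - αk • v := by abel
    rw [h4, inner_sub_left, real_inner_smul_left]
  have e2 : ⟪v, z - xk⟫_ℝ = ⟪v, z - xk1⟫_ℝ + ⟪v, xk1 - xk⟫_ℝ := by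
    rw [← inner_add_right]; congr 1; abel
  have e3 : ‖z - xk‖ ^ 2
      = ‖z - xk1‖ ^ 2 - 2 * ⟪xk - xk1, z - xk1⟫_ℝ + ‖xk - xk1‖ ^ 2 := by
    have h4 : z - xk = (z - xk1) - (xk - xk1) := by abel
    rw [h4, @norm_sub_sq_real, real_inner_comm]; try ring
  have hne : αk ≠ 0 := ne_of_gt hαk
  have hexp : (1 / αk) * ⟪xk - αk • v - xk1, z - xk1⟫_ℝ
      = 2 * (1 / (2 * αk)) * ⟪xk - xk1, z - xk1⟫_ℝ - ⟪v, z - xk1⟫_ℝ := by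
    rw [e1]; field_simp
  rw [hexp] at hvi
  rw [e2] at hgr
  have hnrm : ‖xk1 - xk‖ ^ 2 = ‖xk - xk1‖ ^ 2 := by rw [norm_sub_rev]
  rw [hnrm] at hbt
  rw [e3]
  ring_nf
  ring_nf at hvi hgr hbt
  linarith

end Aux

/-- Proximal-gradient with a backtracking descent condition generates a
self-contracted sequence. -/
theorem proxGrad_backtracking_selfContracted {d : ℕ}
    (g : EuclideanSpace ℝ (Fin d) → EReal)
    (hg_proper : ERealProper g) (hg_convex : ERealConvex g)
    (hg_lsc : LowerSemicontinuous g)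
    (f : EuclideanSpace ℝ (Fin d) → ℝ)
    (f' : EuclideanSpace ℝ (Fin d) → EuclideanSpace ℝ (Fin d))
    (hf_convex : ConvexOn ℝ Set.univ f)
    (hf_diff : ∀ y, HasGradientAt f (f' y) y)
    (α : ℕ → ℝ) (hα : ∀ k, 0 < α k)
    (x : ℕ → EuclideanSpace ℝ (Fin d))
    (hx : ∀ k, IsProx g (α k) (x k - α k • f' (x k)) (x (k + 1)))
    (hbt : ∀ k, f (x (k + 1)) ≤
      f (x k) + ⟪f' (x k), x (k + 1) - x k⟫_ℝ
        + 1 / (2 * α k) * ‖x (k + 1) - x k‖ ^ 2) :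
    SelfContracted x := by
  have hstep : ∀ k (z : EuclideanSpace ℝ (Fin d)), g z ≠ ⊤ →
      f (x (k + 1)) + (g (x (k + 1))).toReal
        + 1 / (2 * α k) * (‖z - x (k + 1)‖ ^ 2 - ‖z - x k‖ ^ 2)
      ≤ f z + (g z).toReal := fun k z hz =>
    aux_step hg_proper hg_convex hf_convex (hα k) (hf_diff (x k)) (hx k) (hbt k) z hz
  have hfin : ∀ k, g (x (k + 1)) ≠ ⊤ := fun k => aux_prox_ne_top hg_proper (hx k)
  have hdec : ∀ k, f (x (k + 2)) + (g (x (k + 2))).toReal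
      ≤ f (x (k + 1)) + (g (x (k + 1))).toReal := by
    intro k
    have h1 := hstep (k + 1) (x (k + 1)) (hfin k)
    simp only [sub_self, norm_zero] at h1
    have hc : 0 < 1 / (2 * α (k + 1)) := by have := hα (k + 1); positivity
    nlinarith [sq_nonneg ‖x (k + 1) - x (k + 2)‖]
  have hmono : ∀ k m, k + 1 ≤ m →
      f (x m) + (g (x m)).toReal ≤ f (x (k + 1)) + (g (x (k + 1))).toReal := by
    intro k
    refine Nat.le_induction le_rfl ?_
    intro n hn ih
    obtain ⟨j, rfl⟩ : ∃ j, n = j + 1 := ⟨n - 1, by omega⟩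
    exact (hdec j).trans ih
  have hkey : ∀ k m, k + 1 ≤ m → ‖x m - x (k + 1)‖ ≤ ‖x m - x k‖ := by
    intro k m h
    obtain ⟨j, rfl⟩ : ∃ j, m = j + 1 := ⟨m - 1, by omega⟩
    have h1 := hstep k (x (j + 1)) (hfin j)
    have h2 := hmono k (j + 1) h
    have hc : 0 < 1 / (2 * α k) := by have := hα k; positivity
    have hsq : ‖x (j + 1) - x (k + 1)‖ ^ 2 ≤ ‖x (j + 1) - x k‖ ^ 2 := by nlinarith
    exact (pow_le_pow_iff_left₀ (norm_nonneg _) (norm_nonneg _) two_ne_zero).mp hsq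
  intro k₁ k₂ k₃ h12 h23
  induction k₂, h12 using Nat.le_induction with
  | base => exact le_rfl
  | succ n hn ih => exact (hkey n k₃ h23).trans (ih (by omega))
end

section
/- Let A, B ⊆ ℝ^d be nonempty closed convex sets, let x₀ ∈ ℝ^d, and define the alternating-projection sequences y_{k+1} = P_A(x_k) and x_{k+1} = P_B(y_{k+1}) for all k ≥ 0. Then both sequences (x_k)_{k∈ℕ} and (y_k)_{k≥1} are self-contracted. -/
open scoped RealInnerProductSpace


/-- `p = P_A(x)`: `p` belongs to `A` and minimizes the distance to `x` over `A`
(for a nonempty closed convex set such a point is unique). -/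
def IsProjOn {d : ℕ} (A : Set (EuclideanSpace ℝ (Fin d)))
    (x p : EuclideanSpace ℝ (Fin d)) : Prop :=
  p ∈ A ∧ ∀ a ∈ A, ‖x - p‖ ≤ ‖x - a‖

set_option maxHeartbeats 1000000 in
/-- The obtuse-angle characterization of metric projections onto convex sets. -/
lemma isProjOn_inner_le {d : ℕ} {C : Set (EuclideanSpace ℝ (Fin d))}
    (hC : Convex ℝ C) {x p : EuclideanSpace ℝ (Fin d)} (h : IsProjOn C x p) :
    ∀ a ∈ C, ⟪x - p, a - p⟫ ≤ 0 := by
  haveI : Nonempty C := ⟨⟨p, h.1⟩⟩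
  have hbdd : BddBelow (Set.range fun w : C => ‖x - (w : EuclideanSpace ℝ (Fin d))‖) := by
    refine ⟨0, ?_⟩
    rintro r ⟨w, rfl⟩
    exact norm_nonneg _
  have h1 : ‖x - p‖ ≤ ⨅ w : C, ‖x - (w : EuclideanSpace ℝ (Fin d))‖ :=
    le_ciInf fun w => h.2 w w.2
  have h2 : (⨅ w : C, ‖x - (w : EuclideanSpace ℝ (Fin d))‖) ≤ ‖x - p‖ :=
    ciInf_le hbdd ⟨p, h.1⟩
  exact (norm_eq_iInf_iff_real_inner_le_zero hC h.1).mp (le_antisymm h1 h2)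

/-- The key geometric inequality.  If `r - p ⊥`-obtusely sees `z` (from a projection step),
`q - r` obtusely sees `s`, and the displacement `s - z` is no longer than `r - p`, then
`z` is closer to `p` than to `q`. -/
lemma key_ineq {E : Type*} [NormedAddCommGroup E] [InnerProductSpace ℝ E]
    (z p q r s : E)
    (h1 : ⟪q - r, s - r⟫ ≤ 0)
    (h2 : ⟪r - p, z - p⟫ ≤ 0)
    (h3 : ‖s - z‖ ≤ ‖r - p‖) :
    ‖z - p‖ ≤ ‖z - q‖ := by
  have cs : ⟪q - r, z - s⟫ ≤ ‖q - r‖ * ‖s - z‖ := by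
    have := real_inner_le_norm (q - r) (z - s)
    rwa [norm_sub_rev z s] at this
  have amgm : ‖q - r‖ * ‖s - z‖ ≤ (‖q - r‖ ^ 2 + ‖r - p‖ ^ 2) / 2 := by
    nlinarith [norm_nonneg (q - r), norm_nonneg (s - z), norm_nonneg (r - p),
      sq_nonneg (‖q - r‖ - ‖s - z‖)]
  have d1 : ⟪q - p, z - p⟫ =
      ⟪q - r, z - s⟫ + ⟪q - r, s - r⟫ + ⟪q - r, r - p⟫ + ⟪r - p, z - p⟫ := by
    simp only [inner_sub_left, inner_sub_right]
    ring
  have d2 : ⟪q - r, r - p⟫ = (‖q - p‖ ^ 2 - ‖q - r‖ ^ 2 - ‖r - p‖ ^ 2) / 2 := by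
    have e : ‖q - p‖ ^ 2 = ‖(q - r) + (r - p)‖ ^ 2 := by
      rw [show (q - r) + (r - p) = q - p by abel]
    rw [norm_add_sq_real] at e
    linarith
  have kq : ⟪q - p, z - p⟫ ≤ ‖q - p‖ ^ 2 / 2 := by
    rw [d1]
    linarith [le_trans cs amgm]
  have e2 : ‖z - q‖ ^ 2 = ‖z - p‖ ^ 2 + ‖q - p‖ ^ 2 - 2 * ⟪q - p, z - p⟫ := by
    have e : ‖z - q‖ ^ 2 = ‖z - p‖ ^ 2 - 2 * ⟪z - p, q - p⟫ + ‖q - p‖ ^ 2 := by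
      rw [← norm_sub_sq_real, show (z - p) - (q - p) = z - q by abel]
    rw [real_inner_comm] at e
    linarith
  have sq : ‖z - p‖ ^ 2 ≤ ‖z - q‖ ^ 2 := by linarith
  nlinarith [norm_nonneg (z - p), norm_nonneg (z - q)]

/-- A sequence satisfying the one-step contraction property is self-contracted. -/
lemma selfContracted_of_step {d : ℕ} (w : ℕ → EuclideanSpace ℝ (Fin d))
    (hstep : ∀ k m : ℕ, k + 1 ≤ m → ‖w m - w (k + 1)‖ ≤ ‖w m - w k‖) :
    SelfContracted w := by
  intro k₁ k₂ k₃ h12 h23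
  induction k₂, h12 using Nat.le_induction with
  | base => exact le_refl _
  | succ n hn ih =>
    exact le_trans (hstep n k₃ h23) (ih (le_trans (Nat.le_succ n) h23))

/-- Both sequences generated by the alternating projection method onto two nonempty
closed convex sets are self-contracted. -/
theorem alternatingProjections_selfContracted {d : ℕ}
    (A B : Set (EuclideanSpace ℝ (Fin d)))
    (hA_ne : A.Nonempty) (hA_cl : IsClosed A) (hA_cv : Convex ℝ A)
    (hB_ne : B.Nonempty) (hB_cl : IsClosed B) (hB_cv : Convex ℝ B)
    (x₀ : EuclideanSpace ℝ (Fin d))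
    (x y : ℕ → EuclideanSpace ℝ (Fin d)) (hx0 : x 0 = x₀)
    (hy : ∀ k, IsProjOn A (x k) (y (k + 1)))
    (hx : ∀ k, IsProjOn B (y (k + 1)) (x (k + 1))) :
    SelfContracted x ∧ SelfContracted (fun k => y (k + 1)) := by
  -- memberships
  have yA : ∀ k : ℕ, 1 ≤ k → y k ∈ A := by
    intro k hk
    obtain ⟨i, rfl⟩ : ∃ i, k = i + 1 := ⟨k - 1, (Nat.succ_pred_eq_of_pos hk).symm⟩
    exact (hy i).1
  have xB : ∀ k : ℕ, 1 ≤ k → x k ∈ B := by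
    intro k hk
    obtain ⟨i, rfl⟩ : ∃ i, k = i + 1 := ⟨k - 1, (Nat.succ_pred_eq_of_pos hk).symm⟩
    exact (hx i).1
  -- one-step decrease of the displacement norms
  have s1 : ∀ j : ℕ, 1 ≤ j → ‖x j - y (j + 1)‖ ≤ ‖y j - x j‖ := by
    intro j hj
    have := (hy j).2 (y j) (yA j hj)
    rwa [norm_sub_rev (y j) (x j)]
  have s2 : ∀ j : ℕ, 1 ≤ j → ‖y (j + 1) - x (j + 1)‖ ≤ ‖x j - y (j + 1)‖ := by
    intro j hj
    have := (hx j).2 (x j) (xB j hj)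
    rwa [norm_sub_rev (x j) (y (j + 1))]
  -- monotonicity of displacement norms
  have monoV : ∀ k m : ℕ, 1 ≤ k → k ≤ m → ‖y m - x m‖ ≤ ‖y k - x k‖ := by
    intro k m hk hkm
    induction m, hkm using Nat.le_induction with
    | base => exact le_refl _
    | succ n hn ih =>
      exact le_trans (le_trans (s2 n (le_trans hk hn)) (s1 n (le_trans hk hn))) ih
  have monoU : ∀ k m : ℕ, 1 ≤ k → k ≤ m → ‖x m - y (m + 1)‖ ≤ ‖x k - y (k + 1)‖ := by
    intro k m hk hkm
    induction m, hkm using Nat.le_induction with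
    | base => exact le_refl _
    | succ n hn ih =>
      exact le_trans (le_trans (s1 (n + 1) (Nat.le_add_left 1 n)) (s2 n (le_trans hk hn))) ih
  -- the two one-step contraction properties
  have stepX : ∀ k m : ℕ, k + 1 ≤ m → ‖x m - x (k + 1)‖ ≤ ‖x m - x k‖ := by
    intro k m hm
    have hm1 : 1 ≤ m := le_trans (Nat.le_add_left 1 k) hm
    refine key_ineq (x m) (x (k + 1)) (x k) (y (k + 1)) (y m) ?_ ?_ ?_
    · exact isProjOn_inner_le hA_cv (hy k) (y m) (yA m hm1)
    · exact isProjOn_inner_le hB_cv (hx k) (x m) (xB m hm1)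
    · exact monoV (k + 1) m (Nat.le_add_left 1 k) hm
  have stepY : ∀ k m : ℕ, 1 ≤ k → k + 1 ≤ m → ‖y m - y (k + 1)‖ ≤ ‖y m - y k‖ := by
    intro k m hk hm
    obtain ⟨i, rfl⟩ : ∃ i, m = i + 1 :=
      ⟨m - 1, (Nat.succ_pred_eq_of_pos (le_trans (Nat.le_add_left 1 k) hm)).symm⟩
    have hki : k ≤ i := Nat.lt_succ_iff.mp hm
    obtain ⟨k', rfl⟩ : ∃ k', k = k' + 1 := ⟨k - 1, (Nat.succ_pred_eq_of_pos hk).symm⟩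
    refine key_ineq (y (i + 1)) (y (k' + 1 + 1)) (y (k' + 1)) (x (k' + 1)) (x i) ?_ ?_ ?_
    · exact isProjOn_inner_le hB_cv (hx k') (x i) (xB i (le_trans hk hki))
    · exact isProjOn_inner_le hA_cv (hy (k' + 1)) (y (i + 1)) (yA (i + 1) (Nat.le_add_left 1 i))
    · exact monoU (k' + 1) i hk hki
  constructor
  · exact selfContracted_of_step x stepX
  · refine selfContracted_of_step (fun k => y (k + 1)) ?_
    intro k m hm
    exact stepY (k + 1) (m + 1) (Nat.le_add_left 1 k) (Nat.add_le_add_right hm 1)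
end

section
/- Let C₁, …, C_n ⊆ ℝ^d be nonempty closed convex sets, let x₀ ∈ ℝ^d, and define the averaged-projection sequence x_{k+1} = (1/n) Σ_{i=1}^n P_{C_i}(x_k) for all k ≥ 0. Then the sequence (x_k)_{k∈ℕ} is self-contracted. -/
open Finset RealInnerProductSpace

/-- Variational characterization of metric projections onto convex sets. -/
lemma proj_char {E : Type*} [NormedAddCommGroup E] [InnerProductSpace ℝ E]
    {K : Set E} (hK : Convex ℝ K) {x p : E} (hp : p ∈ K)
    (hmin : ∀ a ∈ K, ‖x - p‖ ≤ ‖x - a‖) : ∀ a ∈ K, ⟪x - p, a - p⟫ ≤ 0 := by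
  have hne : Nonempty K := ⟨⟨p, hp⟩⟩
  have hbdd : BddBelow (Set.range fun w : K => ‖x - w‖) :=
    ⟨0, by rintro r ⟨w, rfl⟩; exact norm_nonneg _⟩
  have heq : ‖x - p‖ = ⨅ w : K, ‖x - w‖ := by
    apply le_antisymm
    · exact le_ciInf fun w => hmin w w.2
    · exact ciInf_le hbdd ⟨p, hp⟩
  exact (norm_eq_iInf_iff_real_inner_le_zero hK hp).mp heq

/-- The averaged projection method onto finitely many nonempty closed convex sets
generates a self-contracted sequence. -/
theorem averagedProjections_selfContracted {d n : ℕ} (hn : 0 < n)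
    (C : Fin n → Set (EuclideanSpace ℝ (Fin d)))
    (hC_ne : ∀ i, (C i).Nonempty) (hC_cl : ∀ i, IsClosed (C i))
    (hC_cv : ∀ i, Convex ℝ (C i))
    (P : Fin n → EuclideanSpace ℝ (Fin d) → EuclideanSpace ℝ (Fin d))
    (hP : ∀ i x, IsProjOn (C i) x (P i x))
    (x₀ : EuclideanSpace ℝ (Fin d))
    (x : ℕ → EuclideanSpace ℝ (Fin d)) (hx0 : x 0 = x₀)
    (hx : ∀ k, x (k + 1) = (n : ℝ)⁻¹ • ∑ i, P i (x k)) :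
    SelfContracted x := by
  classical
  have hnR : (0:ℝ) < (n:ℝ) := by exact_mod_cast hn
  -- variational inequality for the projections
  have hVI : ∀ i (y : EuclideanSpace ℝ (Fin d)), ∀ a ∈ C i,
      ⟪y - P i y, a - P i y⟫ ≤ 0 := by
    intro i y a ha
    exact proj_char (hC_cv i) (hP i y).1 (hP i y).2 a ha
  -- convexity-type inequality for each squared distance
  have hB : ∀ i (y z : EuclideanSpace ℝ (Fin d)),
      ‖y - P i y‖ ^ 2 - ‖z - P i z‖ ^ 2 ≤ 2 * ⟪y - P i y, y - z⟫ := by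
    intro i y z
    have h1 : (0:ℝ) ≤ ‖(z - P i z) - (y - P i y)‖ ^ 2 := sq_nonneg _
    rw [norm_sub_sq_real] at h1
    have h2 : ⟪y - P i y, P i z - P i y⟫ ≤ 0 := hVI i y (P i z) (hP i z).1
    have hid : ⟪z - P i z, y - P i y⟫
        = ⟪y - P i y, z - y⟫ + ‖y - P i y‖ ^ 2 + ⟪y - P i y, P i y - P i z⟫ := by
      rw [real_inner_comm]
      have hz : z - P i z = (z - y) + (y - P i y) + (P i y - P i z) := by abel
      rw [hz, inner_add_right, inner_add_right, real_inner_self_eq_norm_sq]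
    have h3 : ⟪y - P i y, P i y - P i z⟫ = -⟪y - P i y, P i z - P i y⟫ := by
      rw [← inner_neg_right]; congr 1; abel
    have h4 : ⟪y - P i y, z - y⟫ = -⟪y - P i y, y - z⟫ := by
      rw [← inner_neg_right]; congr 1; abel
    nlinarith [h1, h2, hid]
  -- smoothness-type inequality
  have hA : ∀ i (y w : EuclideanSpace ℝ (Fin d)),
      ‖w - P i w‖ ^ 2 ≤ ‖y - P i y‖ ^ 2 + 2 * ⟪y - P i y, w - y⟫ + ‖w - y‖ ^ 2 := by
    intro i y w
    have h1 : ‖w - P i w‖ ≤ ‖w - P i y‖ := (hP i w).2 _ (hP i y).1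
    have h1' : ‖w - P i w‖ ^ 2 ≤ ‖w - P i y‖ ^ 2 :=
      pow_le_pow_left₀ (norm_nonneg _) h1 2
    have hid : w - P i y = (y - P i y) + (w - y) := by abel
    rw [hid, norm_add_sq_real] at h1'
    linarith
  -- the energy
  set g : EuclideanSpace ℝ (Fin d) → ℝ := fun y => ∑ i, ‖y - P i y‖ ^ 2 with hg
  -- the displacement
  have hD : ∀ k, (∑ i, (x k - P i (x k))) = (n:ℝ) • (x k - x (k+1)) := by
    intro k
    rw [hx k, smul_sub, smul_inv_smul₀ (ne_of_gt hnR)]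
    rw [Finset.sum_sub_distrib]
    congr 1
    simp [Finset.sum_const, card_univ, ← Nat.cast_smul_eq_nsmul ℝ]
  -- summed B inequality
  have hBsum : ∀ (k : ℕ) (z : EuclideanSpace ℝ (Fin d)),
      g (x k) - g z ≤ 2 * (n:ℝ) * ⟪x k - x (k+1), x k - z⟫ := by
    intro k z
    have := Finset.sum_le_sum (fun i (_ : i ∈ Finset.univ) => hB i (x k) z)
    have hsum : ∑ i, 2 * ⟪x k - P i (x k), x k - z⟫
        = 2 * (n:ℝ) * ⟪x k - x (k+1), x k - z⟫ := by
      rw [← Finset.mul_sum, ← sum_inner, hD k, real_inner_smul_left]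
      ring
    rw [hsum] at this
    simp only [hg, Finset.sum_sub_distrib] at this ⊢
    linarith
  -- descent inequality
  have hdesc : ∀ k, g (x (k+1)) ≤ g (x k) - (n:ℝ) * ‖x k - x (k+1)‖ ^ 2 := by
    intro k
    have := Finset.sum_le_sum (fun i (_ : i ∈ Finset.univ) => hA i (x k) (x (k+1)))
    have h1 : ∑ i, (‖x k - P i (x k)‖ ^ 2 + 2 * ⟪x k - P i (x k), x (k+1) - x k⟫
          + ‖x (k+1) - x k‖ ^ 2)
        = g (x k) + 2 * ⟪(n:ℝ) • (x k - x (k+1)), x (k+1) - x k⟫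
          + (n:ℝ) * ‖x (k+1) - x k‖ ^ 2 := by
      rw [Finset.sum_add_distrib, Finset.sum_add_distrib, ← Finset.mul_sum, ← sum_inner, hD k]
      simp [card_univ, mul_comm, hg]
    have h2 : ⟪(n:ℝ) • (x k - x (k+1)), x (k+1) - x k⟫
        = -((n:ℝ) * ‖x k - x (k+1)‖ ^ 2) := by
      rw [real_inner_smul_left]
      have : x (k+1) - x k = -(x k - x (k+1)) := by abel
      rw [this, inner_neg_right, real_inner_self_eq_norm_sq]
      ring
    have h3 : ‖x (k+1) - x k‖ = ‖x k - x (k+1)‖ := norm_sub_rev _ _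
    rw [h1, h2] at this
    rw [h3] at this
    linarith
  -- g is nonincreasing along the sequence
  have hmono : ∀ j m, j ≤ m → g (x m) ≤ g (x j) := by
    intro j m hjm
    induction m with
    | zero => simp_all
    | succ m ih =>
      rcases Nat.lt_or_ge j (m+1) with h | h
      · have := ih (Nat.lt_succ_iff.mp h)
        have h2 := hdesc m
        nlinarith [sq_nonneg ‖x m - x (m+1)‖]
      · have : j = m + 1 := le_antisymm hjm h
        simp [this]
  -- one-step contraction
  have hstep : ∀ k m, k + 1 ≤ m → ‖x m - x (k+1)‖ ≤ ‖x m - x k‖ := by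
    intro k m hkm
    have hgm : g (x m) ≤ g (x (k+1)) := hmono _ _ hkm
    have hd := hdesc k
    have hb := hBsum k (x m)
    -- 2⟪xk - x(k+1), xk - xm⟫ ≥ ‖xk - x(k+1)‖²
    have key : ‖x k - x (k+1)‖ ^ 2 ≤ 2 * ⟪x k - x (k+1), x k - x m⟫ := by
      have : (n:ℝ) * ‖x k - x (k+1)‖ ^ 2 ≤ 2 * (n:ℝ) * ⟪x k - x (k+1), x k - x m⟫ := by
        linarith
      nlinarith
    have hexp : ‖x m - x (k+1)‖ ^ 2
        = ‖x m - x k‖ ^ 2 + 2 * ⟪x m - x k, x k - x (k+1)⟫ + ‖x k - x (k+1)‖ ^ 2 := by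
      have : x m - x (k+1) = (x m - x k) + (x k - x (k+1)) := by abel
      rw [this, norm_add_sq_real]
    have hswap : ⟪x m - x k, x k - x (k+1)⟫ = -⟪x k - x (k+1), x k - x m⟫ := by
      rw [real_inner_comm, ← inner_neg_right]; congr 1; abel
    have hsq : ‖x m - x (k+1)‖ ^ 2 ≤ ‖x m - x k‖ ^ 2 := by
      rw [hexp, hswap]; linarith
    have := Real.sqrt_le_sqrt hsq
    rwa [Real.sqrt_sq (norm_nonneg _), Real.sqrt_sq (norm_nonneg _)] at this
  -- conclude
  intro k₁ k₂ k₃ h12 h23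
  obtain ⟨j, rfl⟩ := Nat.exists_eq_add_of_le h12
  clear h12
  induction j with
  | zero => simp
  | succ j ih =>
    have hj : k₁ + j ≤ k₃ := by omega
    calc ‖x k₃ - x (k₁ + (j+1))‖ = ‖x k₃ - x ((k₁ + j) + 1)‖ := by ring_nf
      _ ≤ ‖x k₃ - x (k₁ + j)‖ := hstep _ _ (by omega)
      _ ≤ ‖x k₃ - x k₁‖ := ih hj
end
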